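/- Let a < b be real numbers, h = b − a, and let w ∈ C¹([a,b]). Then for each s ∈ {a, b}, |w(s)|² ≤ 2( h^{−1} ∫_a^b w(x)² dx + (∫_a^b w(x)² dx)^{1/2} (∫_a^b w′(x)² dx)^{1/2} ). -/

import Mathlib

/-- Multiplicative trace inequality on an interval: for `w ∈ C¹([a,b])` and `s ∈ {a, b}`,
`|w(s)|² ≤ 2 (h⁻¹ ∫ w² + (∫ w²)^{1/2} (∫ w′²)^{1/2})` where `h = b − a`. -/
theorem statement1 (a b : ℝ) (hab : a < b) (w w' : ℝ → ℝ)
    (hw : ∀ x ∈ Set.Icc a b, HasDerivWithinAt w (w' x) (Set.Icc a b) x)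
    (hw' : ContinuousOn w' (Set.Icc a b)) :
    ∀ s ∈ ({a, b} : Set ℝ),
      |w s| ^ 2 ≤
        2 * ((b - a)⁻¹ * (∫ x in a..b, (w x) ^ 2)
          + Real.sqrt (∫ x in a..b, (w x) ^ 2) * Real.sqrt (∫ x in a..b, (w' x) ^ 2)) := by
  have hIoc : Set.Ioc a b ⊆ Set.Icc a b := Set.Ioc_subset_Icc_self
  have hwc : ContinuousOn w (Set.Icc a b) := fun x hx => (hw x hx).continuousWithinAt
  have hw2c : ContinuousOn (fun x => w x ^ 2) (Set.Icc a b) := hwc.pow 2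
  have hw2int : IntervalIntegrable (fun x => w x ^ 2) MeasureTheory.volume a b :=
    (hw2c.mono (by rw [Set.uIcc_of_le hab.le])).intervalIntegrable
  have hw'2int : IntervalIntegrable (fun x => w' x ^ 2) MeasureTheory.volume a b :=
    ((hw'.pow 2).mono (by rw [Set.uIcc_of_le hab.le])).intervalIntegrable
  -- min point of w^2
  obtain ⟨x₀, hx₀, hmin⟩ := isCompact_Icc.exists_isMinOn (Set.nonempty_Icc.2 hab.le) hw2c
  -- integral of w^2 is nonneg
  have hInt_nonneg : 0 ≤ ∫ x in a..b, w x ^ 2 :=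
    intervalIntegral.integral_nonneg hab.le (fun x _ => sq_nonneg _)
  have hInt'_nonneg : 0 ≤ ∫ x in a..b, w' x ^ 2 :=
    intervalIntegral.integral_nonneg hab.le (fun x _ => sq_nonneg _)
  -- mean value bound for min
  have hminle : w x₀ ^ 2 ≤ (b - a)⁻¹ * ∫ x in a..b, w x ^ 2 := by
    have h1 : (b - a) * w x₀ ^ 2 ≤ ∫ x in a..b, w x ^ 2 := by
      have := intervalIntegral.integral_mono_on hab.le intervalIntegrable_const hw2int
        (fun x hx => hmin hx)
      simpa using this
    rw [inv_mul_eq_div, le_div_iff₀ (sub_pos.2 hab)]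
    linarith
  -- Hölder / Cauchy-Schwarz : ∫ |w||w'| ≤ √∫w² √∫w'²
  have hCS : (∫ x in a..b, |w x| * |w' x|) ≤
      Real.sqrt (∫ x in a..b, w x ^ 2) * Real.sqrt (∫ x in a..b, w' x ^ 2) := by
    set μ := MeasureTheory.volume.restrict (Set.Ioc a b) with hμ
    have hfin : MeasureTheory.IsFiniteMeasure μ := by
      constructor
      rw [hμ]
      simp [Real.volume_Ioc]
    obtain ⟨C, hC⟩ := isCompact_Icc.exists_bound_of_continuousOn hwc
    obtain ⟨C', hC'⟩ := isCompact_Icc.exists_bound_of_continuousOn hw'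
    have haem : ∀ᵐ x ∂μ, x ∈ Set.Ioc a b :=
      MeasureTheory.ae_restrict_mem measurableSet_Ioc
    have hmemf : MeasureTheory.MemLp (fun x => |w x|) (ENNReal.ofReal 2) μ := by
      refine MeasureTheory.MemLp.of_bound
        ((hwc.mono hIoc).abs.aestronglyMeasurable measurableSet_Ioc) C ?_
      filter_upwards [haem] with x hx
      simpa [abs_abs] using hC x (hIoc hx)
    have hmemg : MeasureTheory.MemLp (fun x => |w' x|) (ENNReal.ofReal 2) μ := by
      refine MeasureTheory.MemLp.of_bound
        ((hw'.mono hIoc).abs.aestronglyMeasurable measurableSet_Ioc) C' ?_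
      filter_upwards [haem] with x hx
      simpa [abs_abs] using hC' x (hIoc hx)
    have hpq : Real.HolderConjugate 2 2 := by
      constructor <;> norm_num
    have h := MeasureTheory.integral_mul_le_Lp_mul_Lq_of_nonneg hpq
      (MeasureTheory.ae_of_all _ fun x => abs_nonneg (w x))
      (MeasureTheory.ae_of_all _ fun x => abs_nonneg (w' x)) hmemf hmemg
    rw [intervalIntegral.integral_of_le hab.le, intervalIntegral.integral_of_le hab.le,
      intervalIntegral.integral_of_le hab.le]
    have e1 : ∀ u : ℝ → ℝ, (∫ x, |u x| ^ (2:ℝ) ∂μ) = ∫ x, u x ^ 2 ∂μ := by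
      intro u
      refine MeasureTheory.integral_congr_ae (MeasureTheory.ae_of_all _ fun x => ?_)
      show |u x| ^ (2:ℝ) = u x ^ 2
      rw [show (2:ℝ) = ((2:ℕ):ℝ) by norm_num, Real.rpow_natCast, sq_abs]
    rw [e1, e1] at h
    calc (∫ x, |w x| * |w' x| ∂μ)
        ≤ (∫ x, w x ^ 2 ∂μ) ^ (1/(2:ℝ)) * (∫ x, w' x ^ 2 ∂μ) ^ (1/(2:ℝ)) := h
      _ = Real.sqrt (∫ x, w x ^ 2 ∂μ) * Real.sqrt (∫ x, w' x ^ 2 ∂μ) := by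
          rw [Real.sqrt_eq_rpow, Real.sqrt_eq_rpow]
  -- FTC on subintervals
  have hftc : ∀ c ∈ Set.Icc a b, ∀ d ∈ Set.Icc a b,
      (∫ t in c..d, 2 * w t * w' t) = w d ^ 2 - w c ^ 2 := by
    intro c hc d hd
    have huIcc : Set.uIcc c d ⊆ Set.Icc a b := Set.uIcc_subset_Icc hc hd
    refine intervalIntegral.integral_eq_sub_of_hasDeriv_right
      ((hw2c.mono huIcc)) (fun x hx => ?_) ?_
    · have hxab : x ∈ Set.Ioo a b := by
        obtain ⟨h1, h2⟩ := hx
        constructor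
        · exact lt_of_le_of_lt (le_min hc.1 hd.1) h1
        · exact lt_of_lt_of_le h2 (max_le hc.2 hd.2)
      have hda : HasDerivAt w (w' x) x :=
        (hw x (Set.Ioo_subset_Icc_self hxab)).hasDerivAt
          (Icc_mem_nhds hxab.1 hxab.2)
      have := (hda.pow 2).hasDerivWithinAt (s := Set.Ioi x)
      convert this using 1
      · rfl
      · norm_num
    · apply ContinuousOn.intervalIntegrable
      apply ContinuousOn.mono (s := Set.Icc a b)
      · exact (continuousOn_const.mul hwc).mul hw'
      · exact huIcc
  -- bound the integral of |2 w w'|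
  have hbound : ∀ c ∈ Set.Icc a b, ∀ d ∈ Set.Icc a b,
      |∫ t in c..d, 2 * w t * w' t| ≤ 2 * ∫ x in a..b, |w x| * |w' x| := by
    intro c hc d hd
    have habsint : IntervalIntegrable (fun t => |2 * w t * w' t|) MeasureTheory.volume a b := by
      apply ContinuousOn.intervalIntegrable
      apply ContinuousOn.abs
      apply ContinuousOn.mono (s := Set.Icc a b)
      · exact (continuousOn_const.mul hwc).mul hw'
      · rw [Set.uIcc_of_le hab.le]
    have heq : (∫ t in a..b, |2 * w t * w' t|) = 2 * ∫ x in a..b, |w x| * |w' x| := by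
      rw [← intervalIntegral.integral_const_mul]
      apply intervalIntegral.integral_congr
      intro x _
      show |2 * w x * w' x| = 2 * (|w x| * |w' x|)
      rw [abs_mul, abs_mul, abs_two]
      ring
    rcases le_total c d with h | h
    · calc |∫ t in c..d, 2 * w t * w' t| ≤ ∫ t in c..d, |2 * w t * w' t| :=
            intervalIntegral.abs_integral_le_integral_abs h
        _ ≤ ∫ t in a..b, |2 * w t * w' t| :=
            intervalIntegral.integral_mono_interval hc.1 h hd.2
              (MeasureTheory.ae_of_all _ fun x => abs_nonneg _) habsint
        _ = 2 * ∫ x in a..b, |w x| * |w' x| := heq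
    · rw [intervalIntegral.integral_symm, abs_neg]
      calc |∫ t in d..c, 2 * w t * w' t| ≤ ∫ t in d..c, |2 * w t * w' t| :=
            intervalIntegral.abs_integral_le_integral_abs h
        _ ≤ ∫ t in a..b, |2 * w t * w' t| :=
            intervalIntegral.integral_mono_interval hd.1 h hc.2
              (MeasureTheory.ae_of_all _ fun x => abs_nonneg _) habsint
        _ = 2 * ∫ x in a..b, |w x| * |w' x| := heq
  -- main conclusion
  intro s hs
  have hsIcc : s ∈ Set.Icc a b := by
    rcases hs with h | h
    · subst h; exact Set.left_mem_Icc.2 hab.le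
    · rw [Set.mem_singleton_iff] at h; subst h; exact Set.right_mem_Icc.2 hab.le
  have key : w s ^ 2 = w x₀ ^ 2 + ∫ t in x₀..s, 2 * w t * w' t := by
    rw [hftc x₀ hx₀ s hsIcc]; ring
  have h1 : w s ^ 2 ≤ (b - a)⁻¹ * (∫ x in a..b, w x ^ 2)
      + 2 * ∫ x in a..b, |w x| * |w' x| := by
    rw [key]
    have := hbound x₀ hx₀ s hsIcc
    have h2 := le_abs_self (∫ t in x₀..s, 2 * w t * w' t)
    linarith
  have h3 : 2 * (∫ x in a..b, |w x| * |w' x|) ≤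
      2 * (Real.sqrt (∫ x in a..b, w x ^ 2) * Real.sqrt (∫ x in a..b, w' x ^ 2)) := by
    linarith
  have hinvnn : 0 ≤ (b - a)⁻¹ * (∫ x in a..b, w x ^ 2) :=
    mul_nonneg (inv_nonneg.2 (by linarith)) hInt_nonneg
  rw [sq_abs]
  linarith
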